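/- Let A ≠ 0 and B be real constants and let p : (0,∞) → ℝ be twice differentiable with p'(ρ) > 0 for all ρ > 0. Define v(ρ) = (2/A)(√(p'(ρ)) − B). Then the identity ρ · v'(ρ) = (A/2) · v(ρ) + B holds for all ρ > 0 (i.e. the change of variables symmetrizes the Euler system) if and only if there exist constants K₁ > 0 and K such that p(ρ) = K₁/(A+1) · ρ^{A+1} + K when A ≠ −1, or p(ρ) = K₁ · ln ρ + K when A = −1. -/

import Mathlib

open Set Filter Real

lemma deriv_congr_Ioi {f g : ℝ → ℝ} (h : ∀ x ∈ Set.Ioi (0:ℝ), f x = g x) {ρ : ℝ} (hρ : 0 < ρ) :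
    deriv f ρ = deriv g ρ :=
  Filter.EventuallyEq.deriv_eq (Filter.eventuallyEq_of_mem (isOpen_Ioi.mem_nhds hρ) h)

lemma const_of_deriv_zero {f : ℝ → ℝ} (hf : ∀ x ∈ Set.Ioi (0:ℝ), DifferentiableAt ℝ f x)
    (h0 : ∀ x ∈ Set.Ioi (0:ℝ), deriv f x = 0) : ∀ x ∈ Set.Ioi (0:ℝ), f x = f 1 := by
  intro x hx
  refine (convex_Ioi (0:ℝ)).is_const_of_fderivWithin_eq_zero
    (fun y hy => (hf y hy).differentiableWithinAt) (fun y hy => ?_) hx (by norm_num)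
  rw [fderivWithin_of_isOpen isOpen_Ioi hy]
  ext
  simp [← toSpanSingleton_deriv, h0 y hy]

lemma bwd (A B K₁ : ℝ) (hA : A ≠ 0) (hK₁ : 0 < K₁) (p v : ℝ → ℝ)
    (hd : ∀ ρ ∈ Set.Ioi (0:ℝ), deriv p ρ = K₁ * ρ ^ A)
    (hv : ∀ ρ > (0:ℝ), v ρ = (2/A) * (Real.sqrt (deriv p ρ) - B)) :
    ∀ ρ > (0:ℝ), ρ * deriv v ρ = (A/2) * v ρ + B := by
  have hsq : ∀ x ∈ Set.Ioi (0:ℝ), Real.sqrt (deriv p x) = Real.sqrt K₁ * x ^ (A/2) := by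
    intro x hx
    have hx0 : (0:ℝ) < x := hx
    rw [hd x hx, Real.sqrt_mul hK₁.le, Real.sqrt_eq_rpow (x ^ A), ← Real.rpow_mul hx0.le]
    ring_nf
  have hveq : ∀ x ∈ Set.Ioi (0:ℝ),
      v x = (2/A) * Real.sqrt K₁ * x ^ (A/2) - (2/A) * B := by
    intro x hx
    rw [hv x hx, hsq x hx]; ring
  intro ρ hρ
  have hρ0 : ρ ≠ 0 := ne_of_gt hρ
  have hder : HasDerivAt (fun x : ℝ => (2/A) * Real.sqrt K₁ * x ^ (A/2) - (2/A) * B)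
      ((2/A) * Real.sqrt K₁ * (A/2 * ρ ^ (A/2 - 1))) ρ :=
    (((Real.hasDerivAt_rpow_const (Or.inl hρ0)).const_mul _).sub_const _)
  have hdv : deriv v ρ = (2/A) * Real.sqrt K₁ * (A/2 * ρ ^ (A/2 - 1)) := by
    rw [deriv_congr_Ioi hveq hρ]; exact hder.deriv
  have hpow : ρ * ρ ^ (A/2 - 1) = ρ ^ (A/2) := by
    have h := Real.rpow_add hρ (A/2 - 1) 1
    have e : A/2 - 1 + 1 = A/2 := by ring
    rw [e, Real.rpow_one] at h
    rw [h]; ring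
  rw [hdv, hv ρ hρ, hsq ρ hρ]
  have e1 : ρ * (2/A * Real.sqrt K₁ * (A/2 * ρ ^ (A/2 - 1)))
      = Real.sqrt K₁ * ρ ^ (A/2) := by
    have h2 : (2/A) * (A/2) = 1 := by field_simp
    calc ρ * (2/A * Real.sqrt K₁ * (A/2 * ρ ^ (A/2 - 1)))
        = (2/A * (A/2)) * (Real.sqrt K₁ * (ρ * ρ ^ (A/2 - 1))) := by ring
      _ = Real.sqrt K₁ * ρ ^ (A/2) := by rw [h2, hpow]; ring
  have e2 : A/2 * (2/A * (Real.sqrt K₁ * ρ ^ (A/2) - B)) + B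
      = Real.sqrt K₁ * ρ ^ (A/2) := by
    have h2 : A/2 * (2/A) = 1 := by field_simp
    calc A/2 * (2/A * (Real.sqrt K₁ * ρ ^ (A/2) - B)) + B
        = (A/2 * (2/A)) * (Real.sqrt K₁ * ρ ^ (A/2) - B) + B := by ring
      _ = Real.sqrt K₁ * ρ ^ (A/2) := by rw [h2]; ring
  rw [e1, e2]

theorem stmt0 (A B : ℝ) (hA : A ≠ 0) (p : ℝ → ℝ)
    (hp1 : ∀ ρ > (0:ℝ), DifferentiableAt ℝ p ρ)
    (hp2 : ∀ ρ > (0:ℝ), DifferentiableAt ℝ (deriv p) ρ)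
    (hp' : ∀ ρ > (0:ℝ), 0 < deriv p ρ)
    (v : ℝ → ℝ) (hv : ∀ ρ > (0:ℝ), v ρ = (2/A) * (Real.sqrt (deriv p ρ) - B)) :
    (∀ ρ > (0:ℝ), ρ * deriv v ρ = (A/2) * v ρ + B) ↔
    (∃ K₁ > (0:ℝ), ∃ K : ℝ,
      (A ≠ -1 ∧ ∀ ρ > (0:ℝ), p ρ = K₁/(A+1) * ρ ^ (A+1) + K) ∨
      (A = -1 ∧ ∀ ρ > (0:ℝ), p ρ = K₁ * Real.log ρ + K)) := by
  constructor
  · intro H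
    -- Step 1: ρ p'' = A p'
    have hode : ∀ ρ ∈ Set.Ioi (0:ℝ), ρ * deriv (deriv p) ρ = A * deriv p ρ := by
      intro ρ hρ
      have hρ0 : (0:ℝ) < ρ := hρ
      have hs0 : (0:ℝ) < Real.sqrt (deriv p ρ) := Real.sqrt_pos.mpr (hp' ρ hρ0)
      have hder : HasDerivAt (fun x => (2/A) * (Real.sqrt (deriv p x) - B))
          ((2/A) * (deriv (deriv p) ρ / (2 * Real.sqrt (deriv p ρ)))) ρ :=
        ((((hp2 ρ hρ0).hasDerivAt).sqrt (ne_of_gt (hp' ρ hρ0))).sub_const _).const_mul _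
      have hdv : deriv v ρ = (2/A) * (deriv (deriv p) ρ / (2 * Real.sqrt (deriv p ρ))) := by
        rw [deriv_congr_Ioi (fun x hx => hv x hx) hρ0]; exact hder.deriv
      have h1 := H ρ hρ0
      rw [hdv, hv ρ hρ0] at h1
      have hRHS : A/2 * (2/A * (Real.sqrt (deriv p ρ) - B)) + B = Real.sqrt (deriv p ρ) := by
        field_simp
        ring
      rw [hRHS] at h1
      have h2 : ρ * deriv (deriv p) ρ = A * (Real.sqrt (deriv p ρ))^2 := by
        calc ρ * deriv (deriv p) ρ
            = (ρ * (2/A * (deriv (deriv p) ρ / (2 * Real.sqrt (deriv p ρ)))))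
                * (A * Real.sqrt (deriv p ρ)) := by
              field_simp
          _ = Real.sqrt (deriv p ρ) * (A * Real.sqrt (deriv p ρ)) := by rw [h1]
          _ = A * (Real.sqrt (deriv p ρ))^2 := by ring
      rwa [Real.sq_sqrt (hp' ρ hρ0).le] at h2
    -- Step 2: sqrt(p') * ρ^(-A/2) is constant
    set c : ℝ := Real.sqrt (deriv p 1) with hc
    have hc0 : 0 < c := Real.sqrt_pos.mpr (hp' 1 one_pos)
    have hg : ∀ x ∈ Set.Ioi (0:ℝ),
        Real.sqrt (deriv p x) * x ^ (-(A/2)) = c := by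
      have hdiff : ∀ x ∈ Set.Ioi (0:ℝ), DifferentiableAt ℝ
          (fun x => Real.sqrt (deriv p x) * x ^ (-(A/2))) x := by
        intro x hx
        have hx0 : (0:ℝ) < x := hx
        exact ((hp2 x hx0).sqrt (ne_of_gt (hp' x hx0))).mul
          (Real.hasDerivAt_rpow_const (Or.inl (ne_of_gt hx0))).differentiableAt
      have hzero : ∀ x ∈ Set.Ioi (0:ℝ),
          deriv (fun x => Real.sqrt (deriv p x) * x ^ (-(A/2))) x = 0 := by
        intro x hx
        have hx0 : (0:ℝ) < x := hx
        have hs0 : (0:ℝ) < Real.sqrt (deriv p x) := Real.sqrt_pos.mpr (hp' x hx0)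
        have hder : HasDerivAt (fun x => Real.sqrt (deriv p x) * x ^ (-(A/2)))
            ((deriv (deriv p) x / (2 * Real.sqrt (deriv p x))) * x ^ (-(A/2)) +
              Real.sqrt (deriv p x) * (-(A/2) * x ^ (-(A/2) - 1))) x :=
          (((hp2 x hx0).hasDerivAt).sqrt (ne_of_gt (hp' x hx0))).mul
            (Real.hasDerivAt_rpow_const (Or.inl (ne_of_gt hx0)))
        rw [hder.deriv]
        have h2 : deriv (deriv p) x = A * (Real.sqrt (deriv p x))^2 / x := by
          have := hode x hx
          rw [← Real.sq_sqrt (hp' x hx0).le] at this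
          field_simp at this ⊢
          linarith [this]
        have hpow : x ^ (-(A/2) - 1) * x = x ^ (-(A/2)) := by
          have h := Real.rpow_add hx0 (-(A/2) - 1) 1
          have e : -(A/2) - 1 + 1 = -(A/2) := by ring
          rw [e, Real.rpow_one] at h
          rw [h]
        rw [h2, ← hpow]
        field_simp
        ring
      have := const_of_deriv_zero hdiff hzero
      intro x hx
      have h1 := this x hx
      simpa [Real.rpow_neg, Real.one_rpow] using h1
    have hsqrt : ∀ x ∈ Set.Ioi (0:ℝ), Real.sqrt (deriv p x) = c * x ^ (A/2) := by
      intro x hx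
      have hx0 : (0:ℝ) < x := hx
      have h1 := hg x hx
      have h2 : x ^ (-(A/2)) * x ^ (A/2) = 1 := by
        rw [← Real.rpow_add hx0]; norm_num
      calc Real.sqrt (deriv p x) = Real.sqrt (deriv p x) * (x ^ (-(A/2)) * x ^ (A/2)) := by
            rw [h2, mul_one]
        _ = (Real.sqrt (deriv p x) * x ^ (-(A/2))) * x ^ (A/2) := by ring
        _ = c * x ^ (A/2) := by rw [h1]
    have hd : ∀ x ∈ Set.Ioi (0:ℝ), deriv p x = c^2 * x ^ A := by
      intro x hx
      have hx0 : (0:ℝ) < x := hx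
      have := hsqrt x hx
      have h1 : deriv p x = (Real.sqrt (deriv p x))^2 := (Real.sq_sqrt (hp' x hx0).le).symm
      rw [h1, this, mul_pow, ← Real.rpow_natCast (x ^ (A/2)) 2, ← Real.rpow_mul hx0.le]
      norm_num
    refine ⟨c^2, pow_pos hc0 2, ?_⟩
    by_cases hA1 : A = -1
    · -- logarithmic case
      refine ⟨p 1 - c^2 * Real.log 1, Or.inr ⟨hA1, ?_⟩⟩
      have hdiff : ∀ x ∈ Set.Ioi (0:ℝ), DifferentiableAt ℝ
          (fun x => p x - c^2 * Real.log x) x := fun x hx =>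
        (hp1 x hx).sub ((Real.differentiableAt_log (ne_of_gt hx)).const_mul _)
      have hzero : ∀ x ∈ Set.Ioi (0:ℝ),
          deriv (fun x => p x - c^2 * Real.log x) x = 0 := by
        intro x hx
        have hx0 : (0:ℝ) < x := hx
        rw [deriv_fun_sub (hp1 x hx0) ((Real.differentiableAt_log (ne_of_gt hx0)).const_mul _),
          deriv_const_mul _ (Real.differentiableAt_log (ne_of_gt hx0)),
          Real.deriv_log, hd x hx, hA1, Real.rpow_neg_one]
        field_simp
        ring
      intro x hx
      have := const_of_deriv_zero hdiff hzero x hx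
      linarith [this]
    · refine ⟨p 1 - c^2/(A+1) * 1 ^ (A+1), Or.inl ⟨hA1, ?_⟩⟩
      have hA1' : A + 1 ≠ 0 := fun h => hA1 (by linarith)
      have hdiff : ∀ x ∈ Set.Ioi (0:ℝ), DifferentiableAt ℝ
          (fun x => p x - c^2/(A+1) * x ^ (A+1)) x := fun x hx =>
        (hp1 x hx).sub
          (((Real.hasDerivAt_rpow_const (Or.inl (ne_of_gt hx))).differentiableAt).const_mul _)
      have hzero : ∀ x ∈ Set.Ioi (0:ℝ),
          deriv (fun x => p x - c^2/(A+1) * x ^ (A+1)) x = 0 := by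
        intro x hx
        have hx0 : (0:ℝ) < x := hx
        have hder : HasDerivAt (fun x => p x - c^2/(A+1) * x ^ (A+1))
            (deriv p x - c^2/(A+1) * ((A+1) * x ^ (A+1-1))) x :=
          (hp1 x hx0).hasDerivAt.sub
            ((Real.hasDerivAt_rpow_const (Or.inl (ne_of_gt hx0))).const_mul _)
        rw [hder.deriv, hd x hx]
        have : (A:ℝ) + 1 - 1 = A := by ring
        rw [this]
        field_simp
        ring
      intro x hx
      have := const_of_deriv_zero hdiff hzero x hx
      linarith [this]
  · rintro ⟨K₁, hK₁, K, hcase⟩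
    have hd : ∀ ρ ∈ Set.Ioi (0:ℝ), deriv p ρ = K₁ * ρ ^ A := by
      rcases hcase with ⟨hA1, hpe⟩ | ⟨hA1, hpe⟩
      · intro ρ hρ
        have hρ0 : (0:ℝ) < ρ := hρ
        have hA1' : A + 1 ≠ 0 := fun h => hA1 (by linarith)
        have : deriv p ρ = deriv (fun x => K₁/(A+1) * x ^ (A+1) + K) ρ :=
          deriv_congr_Ioi (fun x hx => hpe x hx) hρ0
        rw [this, (((Real.hasDerivAt_rpow_const
          (Or.inl (ne_of_gt hρ0))).const_mul (K₁/(A+1))).add_const K).deriv]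
        have hE : (A:ℝ) + 1 - 1 = A := by ring
        rw [hE]
        field_simp
      · intro ρ hρ
        have hρ0 : (0:ℝ) < ρ := hρ
        have : deriv p ρ = deriv (fun x => K₁ * Real.log x + K) ρ :=
          deriv_congr_Ioi (fun x hx => hpe x hx) hρ0
        rw [this, (((Real.hasDerivAt_log (ne_of_gt hρ0)).const_mul K₁).add_const K).deriv,
          hA1, Real.rpow_neg_one]
    exact bwd A B K₁ hA hK₁ p v hd hv
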